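/- Every 5-connected planar simple graph has the property that every two distinct vertices have at most two common neighbors. -/
import Mathlib

set_option maxHeartbeats 1000000



/-- `H` is a minor of `G`: there is a family of disjoint connected branch sets in `G`,
one for each vertex of `H`, with an edge of `G` between the branch sets of any two
adjacent vertices of `H`. -/
def SimpleGraph.HasMinor {V : Type*} {W : Type*} (G : SimpleGraph V) (H : SimpleGraph W) : Prop :=
  ∃ f : W → Set V,
    (∀ w, (SimpleGraph.induce (f w) G).Connected) ∧
    (∀ w₁ w₂, w₁ ≠ w₂ → Disjoint (f w₁) (f w₂)) ∧
    (∀ w₁ w₂, H.Adj w₁ w₂ → ∃ x ∈ f w₁, ∃ y ∈ f w₂, G.Adj x y)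

/-- A simple graph is planar iff it has neither `K₅` nor `K₃,₃` as a minor
(Wagner's theorem). -/
def SimpleGraph.IsPlanar {V : Type*} (G : SimpleGraph V) : Prop :=
  ¬ G.HasMinor (completeGraph (Fin 5)) ∧ ¬ G.HasMinor (completeBipartiteGraph (Fin 3) (Fin 3))

/-- `G` is `k`-connected: more than `k` vertices, and removing fewer than `k` vertices
leaves a connected graph. -/
def SimpleGraph.IsKConnected {V : Type*} [Fintype V] (k : ℕ) (G : SimpleGraph V) : Prop :=
  k < Fintype.card V ∧
    ∀ s : Set V, s.ncard < k → (SimpleGraph.induce sᶜ G).Connected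

/-- The number of cycles of length `k` in `G`, counted as (cycle) subgraphs. -/
noncomputable def SimpleGraph.cycleCount {V : Type*} (G : SimpleGraph V) (k : ℕ) : ℕ :=
  Nat.card {H : G.Subgraph // ∃ (v : V) (w : G.Walk v v),
    w.IsCycle ∧ w.length = k ∧ w.toSubgraph = H}

/-- A planar triangulation: an edge-maximal planar graph on at least 3 vertices. -/
def SimpleGraph.IsPlanarTriangulation {V : Type*} [Fintype V] (G : SimpleGraph V) : Prop :=
  3 ≤ Fintype.card V ∧ G.IsPlanar ∧
    ∀ u v : V, u ≠ v → ¬ G.Adj u v →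
      ¬ (G ⊔ SimpleGraph.fromEdgeSet {s(u, v)}).IsPlanar

private lemma reach_invariant {α : Type*} {H : SimpleGraph α} (p : α → Prop)
    (hp : ∀ x y, H.Adj x y → p x → p y) {x y : α} (h : H.Reachable x y) (hx : p x) : p y := by
  obtain ⟨w⟩ := h
  induction w with
  | nil => exact hx
  | cons h w ih => exact ih (hp _ _ h hx)

private lemma induce_singleton_connected {V : Type*} (G : SimpleGraph V) (v : V) :
    (G.induce {v}).Connected := by
  rw [SimpleGraph.connected_iff]
  refine ⟨fun x y => ?_, ⟨⟨v, rfl⟩⟩⟩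
  have : x = y := Subtype.ext (by
    have hx := x.2; have hy := y.2
    simp only [Set.mem_singleton_iff] at hx hy
    rw [hx, hy])
  rw [this]

private lemma has_k33 {V : Type*} [Fintype V] [DecidableEq V] (G : SimpleGraph V)
    (hconn : G.IsKConnected 5) (a b x y z : V)
    (hab : a ≠ b) (hxy : x ≠ y) (hxz : x ≠ z) (hyz : y ≠ z)
    (hax : G.Adj a x) (hay : G.Adj a y) (haz : G.Adj a z)
    (hbx : G.Adj b x) (hby : G.Adj b y) (hbz : G.Adj b z) :
    G.HasMinor (completeBipartiteGraph (Fin 3) (Fin 3)) := by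
  classical
  set S : Set V := {a, b, x, y, z} with hS
  -- S has at most 5 elements
  have hS5 : S.ncard ≤ 5 := by
    calc S.ncard ≤ ({b, x, y, z} : Set V).ncard + 1 := Set.ncard_insert_le _ _
      _ ≤ (({x, y, z} : Set V).ncard + 1) + 1 :=
          Nat.add_le_add_right (Set.ncard_insert_le _ _) 1
      _ ≤ ((({y, z} : Set V).ncard + 1) + 1) + 1 :=
          Nat.add_le_add_right (Nat.add_le_add_right (Set.ncard_insert_le _ _) 1) 1
      _ ≤ (((({z} : Set V).ncard + 1) + 1) + 1) + 1 :=
          Nat.add_le_add_right (Nat.add_le_add_right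
            (Nat.add_le_add_right (Set.ncard_insert_le _ _) 1) 1) 1
      _ = 5 := by rw [Set.ncard_singleton]
  -- there is a vertex outside S
  have hcard : 5 < Fintype.card V := hconn.1
  have hScompl : Sᶜ.Nonempty := by
    rw [Set.nonempty_compl]
    intro h
    rw [h, Set.ncard_univ, Nat.card_eq_fintype_card] at hS5
    omega
  obtain ⟨u, hu⟩ := hScompl
  -- the connected component of u in G - S
  set C : Set V := {w | ∃ hw : w ∈ Sᶜ, (G.induce Sᶜ).Reachable ⟨u, hu⟩ ⟨w, hw⟩} with hC
  have huC : u ∈ C := ⟨hu, SimpleGraph.Reachable.refl _⟩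
  have hCsub : C ⊆ Sᶜ := fun w hw => hw.1
  have hCcl : ∀ w ∈ C, ∀ w', G.Adj w w' → w' ∈ Sᶜ → w' ∈ C := by
    rintro w ⟨hw, hr⟩ w' hadj hw'
    exact ⟨hw', hr.trans (SimpleGraph.Adj.reachable (by exact hadj :
      (G.induce Sᶜ).Adj ⟨w, hw⟩ ⟨w', hw'⟩))⟩
  -- the induced graph on C is connected
  have htrans : ∀ (p q : ↥(Sᶜ)) (wk : (G.induce Sᶜ).Walk p q) (hp : ↑p ∈ C),
      ∃ hq : ↑q ∈ C, (G.induce C).Reachable ⟨↑p, hp⟩ ⟨↑q, hq⟩ := by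
    intro p q wk
    induction wk with
    | nil => exact fun hp => ⟨hp, SimpleGraph.Reachable.refl _⟩
    | @cons p m q h wk ih =>
      intro hp
      have hadj : G.Adj ↑p ↑m := h
      have hm : ↑m ∈ C := hCcl _ hp _ hadj m.2
      obtain ⟨hq, hr⟩ := ih hm
      exact ⟨hq, SimpleGraph.Reachable.trans
        (SimpleGraph.Adj.reachable (by exact hadj : (G.induce C).Adj ⟨↑p, hp⟩ ⟨↑m, hm⟩)) hr⟩
  have hCconn : (G.induce C).Connected := by
    rw [SimpleGraph.connected_iff]
    refine ⟨?_, ⟨⟨u, huC⟩⟩⟩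
    have key : ∀ w : ↥C, (G.induce C).Reachable ⟨u, huC⟩ w := by
      rintro ⟨w, hw⟩
      obtain ⟨hw', hr⟩ := hw
      obtain ⟨wk⟩ := hr
      obtain ⟨hq, hr'⟩ := htrans _ _ wk huC
      exact hr'
    intro p q
    exact (key p).symm.trans (key q)
  -- each of x, y, z has a neighbor in C
  have hkey : ∀ v : V, v ∈ S → (S \ {v}).ncard < 5 → ∃ c ∈ C, G.Adj c v := by
    intro v hv hT
    by_contra hno
    push_neg at hno
    have hconn' := hconn.2 (S \ {v}) hT
    rw [SimpleGraph.connected_iff] at hconn'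
    have huT : u ∈ (S \ {v})ᶜ := fun h => hu h.1
    have hvT : v ∈ (S \ {v})ᶜ := fun h => h.2 rfl
    have hreach := hconn'.1 ⟨u, huT⟩ ⟨v, hvT⟩
    have hvC : v ∈ C := by
      refine reach_invariant (H := G.induce (S \ {v})ᶜ) (fun w => ↑w ∈ C) ?_ hreach huC
      rintro ⟨p, hp⟩ ⟨q, hq⟩ hadj hpC
      have hadj' : G.Adj p q := hadj
      by_cases hqS : q ∈ S
      · have : q = v := by
          by_contra hqv
          exact hq ⟨hqS, hqv⟩
        exact absurd (this ▸ hadj') (hno p hpC)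
      · exact hCcl _ hpC _ hadj' hqS
    exact hCsub hvC hv
  -- ncard bounds for the three cuts
  have hbound : ∀ (v p q r s : V), S \ {v} ⊆ {p, q, r, s} → (S \ {v}).ncard < 5 := by
    intro v p q r s hsub
    have h4 : ({p, q, r, s} : Set V).ncard ≤ 4 := by
      calc ({p, q, r, s} : Set V).ncard ≤ ({q, r, s} : Set V).ncard + 1 := Set.ncard_insert_le _ _
        _ ≤ (({r, s} : Set V).ncard + 1) + 1 := Nat.add_le_add_right (Set.ncard_insert_le _ _) 1
        _ ≤ ((({s} : Set V).ncard + 1) + 1) + 1 := Nat.add_le_add_right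
            (Nat.add_le_add_right (Set.ncard_insert_le _ _) 1) 1
        _ = 4 := by rw [Set.ncard_singleton]
    have := Set.ncard_le_ncard hsub (Set.toFinite _)
    omega
  have hxS : x ∈ S := by simp [hS]
  have hyS : y ∈ S := by simp [hS]
  have hzS : z ∈ S := by simp [hS]
  obtain ⟨cx, hcx, hcxadj⟩ := hkey x hxS (hbound x a b y z (by
    rintro w ⟨hw, hw'⟩
    simp only [hS, Set.mem_insert_iff, Set.mem_singleton_iff] at hw ⊢
    simp only [Set.mem_singleton_iff] at hw'
    tauto))
  obtain ⟨cy, hcy, hcyadj⟩ := hkey y hyS (hbound y a b x z (by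
    rintro w ⟨hw, hw'⟩
    simp only [hS, Set.mem_insert_iff, Set.mem_singleton_iff] at hw ⊢
    simp only [Set.mem_singleton_iff] at hw'
    tauto))
  obtain ⟨cz, hcz, hczadj⟩ := hkey z hzS (hbound z a b x y (by
    rintro w ⟨hw, hw'⟩
    simp only [hS, Set.mem_insert_iff, Set.mem_singleton_iff] at hw ⊢
    simp only [Set.mem_singleton_iff] at hw'
    tauto))
  -- assemble the K₃,₃ minor
  have haS : a ∈ S := by simp [hS]
  have hbS : b ∈ S := by simp [hS]
  have hax' : a ≠ x := hax.ne
  have hay' : a ≠ y := hay.ne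
  have haz' : a ≠ z := haz.ne
  have hbx' : b ≠ x := hbx.ne
  have hby' : b ≠ y := hby.ne
  have hbz' : b ≠ z := hbz.ne
  have haC : a ∉ C := fun h => hCsub h haS
  have hbC : b ∉ C := fun h => hCsub h hbS
  have hxC : x ∉ C := fun h => hCsub h hxS
  have hyC : y ∉ C := fun h => hCsub h hyS
  have hzC : z ∉ C := fun h => hCsub h hzS
  refine ⟨Sum.elim ![{a}, {b}, C] ![{x}, {y}, {z}], ?_, ?_, ?_⟩
  · rintro (i | i) <;> fin_cases i <;>
      simp only [Sum.elim_inl, Sum.elim_inr, Matrix.cons_val_zero, Matrix.cons_val_one,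
        Matrix.head_cons, Matrix.cons_val_two, Matrix.tail_cons] <;>
      first
        | exact induce_singleton_connected G _
        | exact hCconn
  · have hba := hab.symm
    have hxa := hax'.symm
    have hya := hay'.symm
    have hza := haz'.symm
    have hxb := hbx'.symm
    have hyb := hby'.symm
    have hzb := hbz'.symm
    have hyx := hxy.symm
    have hzx := hxz.symm
    have hzy := hyz.symm
    rintro (i | i) (j | j) hne <;> fin_cases i <;> fin_cases j <;>
      simp only [Sum.elim_inl, Sum.elim_inr, Matrix.cons_val_zero, Matrix.cons_val_one,
        Matrix.head_cons, Matrix.cons_val_two, Matrix.tail_cons] <;>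
      first
        | exact (hne rfl).elim
        | exact Set.disjoint_singleton.mpr (by assumption)
        | exact Set.disjoint_singleton_left.mpr (by assumption)
        | exact Set.disjoint_singleton_right.mpr (by assumption)
  · rintro (i | i) (j | j) hadj
    · exact absurd hadj (by simp)
    · fin_cases i <;> fin_cases j <;>
        simp only [Sum.elim_inl, Sum.elim_inr, Matrix.cons_val_zero, Matrix.cons_val_one,
          Matrix.head_cons, Matrix.cons_val_two, Matrix.tail_cons]
      · exact ⟨a, rfl, x, rfl, hax⟩
      · exact ⟨a, rfl, y, rfl, hay⟩
      · exact ⟨a, rfl, z, rfl, haz⟩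
      · exact ⟨b, rfl, x, rfl, hbx⟩
      · exact ⟨b, rfl, y, rfl, hby⟩
      · exact ⟨b, rfl, z, rfl, hbz⟩
      · exact ⟨cx, hcx, x, rfl, hcxadj⟩
      · exact ⟨cy, hcy, y, rfl, hcyadj⟩
      · exact ⟨cz, hcz, z, rfl, hczadj⟩
    · fin_cases i <;> fin_cases j <;>
        simp only [Sum.elim_inl, Sum.elim_inr, Matrix.cons_val_zero, Matrix.cons_val_one,
          Matrix.head_cons, Matrix.cons_val_two, Matrix.tail_cons]
      · exact ⟨x, rfl, a, rfl, hax.symm⟩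
      · exact ⟨x, rfl, b, rfl, hbx.symm⟩
      · exact ⟨x, rfl, cx, hcx, hcxadj.symm⟩
      · exact ⟨y, rfl, a, rfl, hay.symm⟩
      · exact ⟨y, rfl, b, rfl, hby.symm⟩
      · exact ⟨y, rfl, cy, hcy, hcyadj.symm⟩
      · exact ⟨z, rfl, a, rfl, haz.symm⟩
      · exact ⟨z, rfl, b, rfl, hbz.symm⟩
      · exact ⟨z, rfl, cz, hcz, hczadj.symm⟩
    · exact absurd hadj (by simp)

theorem stmt_10 {V : Type*} [Fintype V] [DecidableEq V] (G : SimpleGraph V)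
    [DecidableRel G.Adj] (hconn : G.IsKConnected 5) (hplanar : G.IsPlanar) :
    ∀ a b : V, a ≠ b → (G.neighborFinset a ∩ G.neighborFinset b).card ≤ 2 := by
  intro a b hab
  by_contra h
  push_neg at h
  obtain ⟨x, y, z, hx, hy, hz, hxy, hxz, hyz⟩ := Finset.two_lt_card_iff.mp h
  simp only [Finset.mem_inter, SimpleGraph.mem_neighborFinset] at hx hy hz
  exact hplanar.2 (has_k33 G hconn a b x y z hab hxy hxz hyz
    hx.1 hy.1 hz.1 hx.2 hy.2 hz.2)
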